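/- For every n ≥ 0, ∑_{k=0}^{n} L*_{2k+1}(1,-1,q) / ((q;q)_{n-k} (q;q)_{n+k+1}) = 1/(q;q)_{2n+1}. -/

import Mathlib

open Finset

noncomputable section

abbrev K : Type := RatFunc ℚ

def q : K := RatFunc.X

def qint (a : K) (m : ℕ) : K := ∑ i ∈ range m, a ^ i

def qfact (a : K) (m : ℕ) : K := ∏ i ∈ range m, qint a (i + 1)

def qbinom (a : K) (n k : ℕ) : K :=
  if k ≤ n then qfact a n / (qfact a k * qfact a (n - k)) else 0

/-- q-Fibonacci polynomials F_n(x,s,q) with base `a`. -/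
def qF (a x s : K) : ℕ → K
  | 0 => 0
  | n + 1 => ∑ k ∈ range (n / 2 + 1),
      a ^ (k * (k + 1) / 2) * qbinom a (n - k) k * s ^ k * x ^ (n - 2 * k)

/-- q-Lucas polynomials L_n(x,s,q) with base `a` (L_0 = 2). -/
def qL (a x s : K) (n : ℕ) : K :=
  if n = 0 then 2 else
  ∑ k ∈ range (n / 2 + 1),
    a ^ (k * (k - 1) / 2) * (qint a n / qint a (n - k)) * qbinom a (n - k) k
      * s ^ k * x ^ (n - 2 * k)

/-- Starred variant: L*_0 = 1, L*_n = L_n for n > 0. -/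
def qLs (a x s : K) (n : ℕ) : K := if n = 0 then 1 else qL a x s n

/-- Rogers-Szegő polynomial. -/
def rs (a x y : K) (m : ℕ) : K := ∑ j ∈ range (m + 1), qbinom a m j * x ^ j * y ^ (m - j)

/-- q-Pochhammer (q;q)_m. -/
def qpoch (a : K) (m : ℕ) : K := ∏ j ∈ range m, (1 - a ^ (j + 1))

-- Part 0
lemma q_ne : q ≠ 0 := RatFunc.X_ne_zero

lemma qint_eq (m : ℕ) : qint q m = algebraMap (Polynomial ℚ) K (∑ i ∈ range m, Polynomial.X ^ i) := by
  rw [qint, map_sum]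
  refine Finset.sum_congr rfl fun i _ => ?_
  rw [map_pow, RatFunc.algebraMap_X, q]

lemma qint_ne (m : ℕ) (hm : m ≠ 0) : qint q m ≠ 0 := by
  rw [qint_eq]
  intro h
  have h2 : (∑ i ∈ range m, (Polynomial.X : Polynomial ℚ) ^ i) = 0 :=
    RatFunc.algebraMap_injective ℚ (by simpa using h)
  have h3 := congrArg (Polynomial.eval 1) h2
  simp [Polynomial.eval_finset_sum] at h3
  exact hm (by exact_mod_cast h3)

lemma qfact_ne (m : ℕ) : qfact q m ≠ 0 := by
  rw [qfact]
  exact Finset.prod_ne_zero_iff.2 fun i _ => qint_ne (i+1) (by omega)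

lemma one_sub_q_pow_ne (m : ℕ) (hm : m ≠ 0) : (1 : K) - q ^ m ≠ 0 := by
  have : (1 : K) - q ^ m = algebraMap (Polynomial ℚ) K (1 - Polynomial.X ^ m) := by
    rw [map_sub, map_one, map_pow, RatFunc.algebraMap_X, q]
  rw [this]
  intro h
  have h2 : (1 - (Polynomial.X : Polynomial ℚ) ^ m) = 0 :=
    RatFunc.algebraMap_injective ℚ (by simpa using h)
  have h3 := congrArg (Polynomial.eval 0) h2
  simp [hm] at h3

lemma qpoch_ne (m : ℕ) : qpoch q m ≠ 0 := by
  rw [qpoch]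
  exact Finset.prod_ne_zero_iff.2 fun i _ => one_sub_q_pow_ne (i+1) (by omega)

lemma one_sub_q_mul_qint (m : ℕ) : (1 - q) * qint q m = 1 - q ^ m := by
  have := geom_sum_mul q m
  rw [qint]
  linear_combination -this

lemma qfact_succ (m : ℕ) : qfact q (m + 1) = qfact q m * qint q (m + 1) := by
  rw [qfact, Finset.prod_range_succ, ← qfact]

lemma qpoch_eq (m : ℕ) : qpoch q m = (1 - q) ^ m * qfact q m := by
  induction m with
  | zero => simp [qpoch, qfact]
  | succ n ih =>
    rw [qpoch, Finset.prod_range_succ, ← qpoch, ih, qfact_succ, ← one_sub_q_mul_qint]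
    ring

-- Part 1 : qbinom
lemma qbinom_eq {n k : ℕ} (h : k ≤ n) :
    qbinom q n k = qfact q n / (qfact q k * qfact q (n - k)) := if_pos h

lemma qbinom_of_gt {n k : ℕ} (h : n < k) : qbinom q n k = 0 := if_neg (by omega)

lemma qbinom_zero (n : ℕ) : qbinom q n 0 = 1 := by
  rw [qbinom_eq (Nat.zero_le n)]
  simp [qfact]
  exact qfact_ne n

lemma qbinom_self (n : ℕ) : qbinom q n n = 1 := by
  rw [qbinom_eq le_rfl]
  simp [qfact]
  exact qfact_ne n

lemma qbinom_symm {n k : ℕ} (h : k ≤ n) : qbinom q n k = qbinom q n (n - k) := by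
  rw [qbinom_eq h, qbinom_eq (Nat.sub_le n k), Nat.sub_sub_self h, mul_comm]

lemma qint_add (a b : ℕ) : qint q (a + b) = qint q a + q ^ a * qint q b := by
  induction b with
  | zero => simp [qint]
  | succ c ih =>
    rw [show a + (c+1) = (a+c)+1 by omega, qint, Finset.sum_range_succ, ← qint, ih]
    rw [show qint q (c+1) = qint q c + q ^ c by rw [qint, Finset.sum_range_succ, ← qint]]
    ring

/-- Pascal 1, valid for all n k. -/
lemma pascal1 (n k : ℕ) :
    qbinom q (n + 1) (k + 1) = qbinom q n k + q ^ (k + 1) * qbinom q n (k + 1) := by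
  rcases lt_or_ge n k with h | h
  · rw [qbinom_of_gt (by omega), qbinom_of_gt (by omega), qbinom_of_gt (by omega)]
    ring
  rcases eq_or_lt_of_le h with rfl | h2
  · rw [qbinom_self, qbinom_self, qbinom_of_gt (by omega)]
    ring
  -- main case k + 1 ≤ n
  have hk1n : k + 1 ≤ n := h2
  rw [qbinom_eq (by omega), qbinom_eq (by omega), qbinom_eq (by omega)]
  have e1 : n + 1 - (k+1) = n - k := by omega
  have e2 : n - k = (n - (k+1)) + 1 := by omega
  rw [e1, qfact_succ n, e2, qfact_succ (n - (k+1)), qfact_succ k]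
  have key : qint q (n+1) = qint q (k+1) + q ^ (k+1) * qint q (n - (k+1) + 1) := by
    rw [← qint_add]
    congr 1
    omega
  rw [key]
  have h1 := qfact_ne n
  have h2 := qfact_ne k
  have h3 := qfact_ne (n - (k+1))
  have h4 := qint_ne (k+1) (by omega)
  have h5 := qint_ne (n - (k+1) + 1) (by omega)
  field_simp

/-- Pascal 2, valid for all n k (with truncated subtraction caveat handled). -/
lemma pascal2 (n k : ℕ) :
    qbinom q (n + 1) (k + 1) = qbinom q n (k + 1) + q ^ (n - k) * qbinom q n k := by
  rcases lt_or_ge n k with h | h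
  · rw [qbinom_of_gt (by omega), qbinom_of_gt (by omega), qbinom_of_gt (by omega)]
    ring
  -- k ≤ n
  have h1 : qbinom q (n+1) (k+1) = qbinom q (n+1) (n - k) := by
    rw [qbinom_symm (show k+1 ≤ n+1 by omega)]
    congr 1
    omega
  rcases Nat.eq_zero_or_pos (n - k) with h0 | hpos
  · -- k = n
    have : k = n := by omega
    subst this
    rw [h0] at h1
    rw [h1, qbinom_zero, qbinom_of_gt (by omega), qbinom_self, h0]
    ring
  obtain ⟨m, hm⟩ : ∃ m, n - k = m + 1 := ⟨n - k - 1, by omega⟩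
  rw [h1, hm, pascal1 n m]
  have e1 : qbinom q n m = qbinom q n (k+1) := by
    rw [qbinom_symm (show m ≤ n by omega)]
    congr 1
    omega
  have e2 : qbinom q n (m+1) = qbinom q n k := by
    rw [qbinom_symm (show m+1 ≤ n by omega)]
    congr 1
    omega
  rw [e1, e2]

-- QB : ℤ-indexed q-binomial
def QB (n : ℕ) (m : ℤ) : K := if 0 ≤ m then qbinom q n m.toNat else 0

lemma QB_neg {n : ℕ} {m : ℤ} (h : m < 0) : QB n m = 0 := if_neg (by omega)

lemma QB_gt {n : ℕ} {m : ℤ} (h : (n : ℤ) < m) : QB n m = 0 := by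
  rw [QB, if_pos (by omega), qbinom_of_gt (by omega)]

lemma QB_nat (n k : ℕ) : QB n (k : ℤ) = qbinom q n k := by
  rw [QB, if_pos (by omega), Int.toNat_natCast]

lemma QB_symm (n : ℕ) (m : ℤ) : QB n m = QB n ((n : ℤ) - m) := by
  rcases lt_or_ge m 0 with h | h
  · rw [QB_neg h, QB_gt (show (n:ℤ) < (n:ℤ) - m by omega)]
  rcases le_or_gt m (n:ℤ) with h2 | h2
  · obtain ⟨k, rfl⟩ : ∃ k : ℕ, m = (k : ℤ) := ⟨m.toNat, by omega⟩
    have hk : k ≤ n := by exact_mod_cast h2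
    rw [QB_nat, show ((n:ℤ) - k) = ((n - k : ℕ) : ℤ) by omega, QB_nat]
    exact qbinom_symm hk
  · rw [QB_gt h2, QB_neg (by omega)]

/-- QP1 valid for all m : ℤ. -/
lemma QP1 (n : ℕ) (m : ℤ) : QB (n+1) m = QB n (m - 1) + q ^ m * QB n m := by
  rcases lt_or_ge m 0 with h | h
  · rw [QB_neg h, QB_neg (by omega), QB_neg h]
    ring
  rcases eq_or_lt_of_le h with rfl | h1
  · have h0 : ∀ nn : ℕ, QB nn (0:ℤ) = (1:K) := fun nn => by
      rw [show ((0:ℤ)) = ((0:ℕ):ℤ) by norm_num, QB_nat, qbinom_zero]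
    rw [show ((0:ℤ) - 1) = -1 by ring, h0, h0, QB_neg (show (-1:ℤ) < 0 by norm_num)]
    norm_num
  · obtain ⟨k, rfl⟩ : ∃ k : ℕ, m = ((k : ℤ) + 1) := ⟨(m-1).toNat, by omega⟩
    rw [show ((k:ℤ) + 1 - 1) = (k:ℤ) by ring, QB_nat,
      show ((k:ℤ)+1) = ((k+1 : ℕ) : ℤ) by omega, QB_nat, QB_nat, pascal1 n k]
    rw [zpow_natCast]

/-- QP2 valid for all m : ℤ. -/
lemma QP2 (n : ℕ) (m : ℤ) : QB (n+1) m = QB n m + q ^ ((n:ℤ) + 1 - m) * QB n (m - 1) := by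
  rw [QB_symm (n+1) m, show (((n+1:ℕ)):ℤ) - m = ((n:ℤ)+1-m) by push_cast; ring,
    QP1 n ((n:ℤ)+1-m)]
  have e1 : QB n ((n:ℤ) + 1 - m - 1) = QB n m := by
    rw [QB_symm n m]; congr 1; ring
  have e2 : QB n ((n:ℤ) + 1 - m) = QB n (m - 1) := by
    rw [QB_symm n (m-1)]; congr 1; ring
  rw [e1, e2]

-- the pentagonal term
def Tz (N : ℕ) (j : ℤ) : K := (-1 : K) ^ j * q ^ ((j * (3*j+1)) / 2) * QB N (((N:ℤ) - 3*j) / 2)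

lemma Tz_vanish {N : ℕ} {j : ℤ} (h : (N:ℤ) + 1 ≤ 3*j ∨ 3*j ≤ -(N:ℤ) - 2) : Tz N j = 0 := by
  rcases h with h | h
  · rw [Tz, QB_neg (by omega)]
    ring
  · rw [Tz, QB_gt (by omega)]
    ring

def SS (M N : ℕ) : K := ∑ t ∈ range (2*M+1), Tz N ((t : ℤ) - M)

lemma SS_ext {M N : ℕ} (h : N ≤ M) : SS (M+1) N = SS M N := by
  rw [SS, show 2*(M+1)+1 = (2*M+2)+1 by ring, Finset.sum_range_succ, Finset.sum_range_succ']
  have h1 : Tz N (((2*M+2 : ℕ) : ℤ) - (M+1 : ℕ)) = 0 := by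
    apply Tz_vanish
    left
    push_cast
    omega
  have h2 : Tz N (((0 : ℕ) : ℤ) - (M+1 : ℕ)) = 0 := by
    apply Tz_vanish
    right
    push_cast
    omega
  rw [h1, h2, SS]
  simp only [add_zero, zero_add]
  refine Finset.sum_congr rfl fun t _ => ?_
  congr 1
  push_cast
  ring

lemma SS_eq {M N : ℕ} (h : N ≤ M) : SS M N = SS N N := by
  induction M with
  | zero => have : N = 0 := by omega
            subst this; rfl
  | succ m ih =>
    rcases Nat.eq_or_lt_of_le h with h1 | h1
    · rw [h1]
    · rw [SS_ext (by omega), ih (by omega)]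

-- helper: sum over range (2*M) in pairs
lemma sum_pairs {β : Type} [AddCommMonoid β] (f : ℕ → β) (M : ℕ) :
    ∑ t ∈ range (2*M), f t = ∑ s ∈ range M, (f (2*s) + f (2*s+1)) := by
  induction M with
  | zero => simp
  | succ m ih =>
    rw [show 2*(m+1) = (2*m+1)+1 by ring, Finset.sum_range_succ, Finset.sum_range_succ,
      ih, Finset.sum_range_succ]
    abel

-- helper: sum over range (3*M) in triples
lemma sum_triples {β : Type} [AddCommMonoid β] (f : ℕ → β) (M : ℕ) :
    ∑ t ∈ range (3*M), f t = ∑ s ∈ range M, (f (3*s) + f (3*s+1) + f (3*s+2)) := by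
  induction M with
  | zero => simp
  | succ m ih =>
    rw [show 3*(m+1) = ((3*m+1)+1)+1 by ring, Finset.sum_range_succ, Finset.sum_range_succ,
      Finset.sum_range_succ, ih, Finset.sum_range_succ]
    abel

lemma neg_one_ne : (-1 : K) ≠ 0 := by norm_num

/-- The core pair cancellation. -/
lemma pair_cancel (N s : ℕ) :
    Tz (N+1) (2*(s:ℤ) - N - 2) + Tz (N+1) (2*(s:ℤ) - N - 1)
      = Tz N (2*(s:ℤ) - N - 2) + Tz N (2*(s:ℤ) - N - 1) := by
  set jl : ℤ := 2*(s:ℤ) - N - 2 with hjl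
  set jh : ℤ := 2*(s:ℤ) - N - 1 with hjh
  set m : ℤ := 2*(N:ℤ) + 2 - 3*s with hm
  obtain ⟨u, hu⟩ : ∃ u : ℤ, jl * (3*jl+1) = 2*u := by
    rcases Int.even_or_odd jl with ⟨w, hw⟩ | ⟨w, hw⟩
    · exact ⟨w * (3*jl+1), by rw [hw]; ring⟩
    · exact ⟨jl * (3*w+2), by rw [hw]; ring⟩
  have hjh' : jh = jl + 1 := by omega
  have ehu : jh * (3*jh+1) = 2*(u + 3*jh - 1) := by
    rw [hjh']; linear_combination hu
  have el : (jl * (3*jl+1)) / 2 = u := by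
    rw [hu, Int.mul_ediv_cancel_left _ (by norm_num : (2:ℤ) ≠ 0)]
  have eh : (jh * (3*jh+1)) / 2 = u + 3*jh - 1 := by
    rw [ehu, Int.mul_ediv_cancel_left _ (by norm_num : (2:ℤ) ≠ 0)]
  -- indices
  have i1 : (((N:ℕ)+1 : ℕ) : ℤ) = (N:ℤ)+1 := by push_cast; ring
  have idx1 : (((N:ℤ)+1) - 3*jh) / 2 = m := by omega
  have idx2 : ((N:ℤ) - 3*jh) / 2 = m - 1 := by omega
  have idx3 : (((N:ℤ)+1) - 3*jl) / 2 = m + 1 := by omega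
  have idx4 : ((N:ℤ) - 3*jl) / 2 = m + 1 := by omega
  have sgn : (-1 : K) ^ jh = -(-1 : K) ^ jl := by
    rw [hjh', zpow_add₀ neg_one_ne, zpow_one]
    ring
  rw [Tz, Tz, Tz, Tz, i1, idx1, idx2, idx3, idx4, el, eh, sgn]
  rw [QP1 N m, QP2 N (m+1)]
  have expeq : u + ((N:ℤ)+1 - (m+1)) = (u + 3*jh - 1) + m := by omega
  have qexp : q ^ u * q ^ ((N:ℤ)+1-(m+1)) = q ^ (u + 3*jh - 1) * q ^ m := by
    rw [← zpow_add₀ q_ne, ← zpow_add₀ q_ne, expeq]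
  rw [show (m + 1 - 1) = m by ring]
  linear_combination ((-1:K)^jl * QB N m) * qexp

lemma SS_step (N : ℕ) : SS (N+2) (N+1) = SS (N+2) N := by
  rw [SS, SS, show 2*(N+2)+1 = (2*(N+2))+1 by ring, Finset.sum_range_succ, Finset.sum_range_succ]
  have h1 : Tz (N+1) (((2*(N+2) : ℕ) : ℤ) - ((N+2 : ℕ) : ℤ)) = 0 := by
    apply Tz_vanish; left; push_cast; omega
  have h2 : Tz N (((2*(N+2) : ℕ) : ℤ) - ((N+2 : ℕ) : ℤ)) = 0 := by
    apply Tz_vanish; left; push_cast; omega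
  rw [h1, h2, add_zero, add_zero, sum_pairs, sum_pairs]
  refine Finset.sum_congr rfl fun s _ => ?_
  have e1 : ((2*s : ℕ) : ℤ) - ((N+2 : ℕ) : ℤ) = 2*(s:ℤ) - N - 2 := by push_cast; ring
  have e2 : ((2*s+1 : ℕ) : ℤ) - ((N+2 : ℕ) : ℤ) = 2*(s:ℤ) - N - 1 := by push_cast; ring
  rw [e1, e2, pair_cancel]

lemma SS_one (N : ℕ) : SS N N = 1 := by
  induction N with
  | zero =>
    have ht : Tz 0 0 = 1 := by
      rw [Tz]
      norm_num
      have h00 := QB_nat 0 0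
      rw [qbinom_zero] at h00
      simpa using h00
    rw [SS]
    simp only [Nat.mul_zero, Nat.zero_add, Finset.sum_range_one]
    rw [show ((0:ℕ):ℤ) - ((0:ℕ):ℤ) = 0 by norm_num, ht]
  | succ n ih =>
    have h1 : SS (n+2) (n+1) = SS (n+1) (n+1) := SS_ext (by omega)
    have h2 : SS (n+2) n = SS n n := SS_eq (by omega)
    rw [← h1, SS_step, h2, ih]

-- Part 3 : the Schur-like sums
def bb (m : ℕ) : K := ∑ i ∈ range (m+1), (-1 : K)^i * q^(i*(i-1)/2) * qbinom q (m - i) i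

def bb2 (m : ℕ) : K := ∑ i ∈ range (m+1), (-1 : K)^i * q^(i*(i+1)/2) * qbinom q (m - i) i

lemma qbinom_small {a b : ℕ} (h : a < b) : qbinom q a b = 0 := qbinom_of_gt h

lemma term_vanish {m i : ℕ} (h : m < 2*i) : qbinom q (m - i) i = 0 :=
  qbinom_of_gt (by omega)

lemma tri1 (i : ℕ) : 2 * (i*(i+1)/2) = i*(i+1) :=
  Nat.mul_div_cancel' (Nat.even_mul_succ_self i).two_dvd

lemma tri2 (i : ℕ) : 2 * (i*(i-1)/2) = i*(i-1) := by
  apply Nat.mul_div_cancel'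
  rcases i with _ | w
  · simp
  · rw [Nat.succ_sub_one, Nat.mul_comm]
    exact (Nat.even_mul_succ_self w).two_dvd

lemma bb_ext (m j : ℕ) (h : m ≤ j) :
    bb m = ∑ i ∈ range (j+1), (-1 : K)^i * q^(i*(i-1)/2) * qbinom q (m - i) i := by
  rw [bb]
  apply Finset.sum_subset
  · intro x hx
    simp only [Finset.mem_range] at hx ⊢
    omega
  · intro x _ hx
    simp only [Finset.mem_range, not_lt] at hx
    rw [term_vanish (by omega)]
    ring

lemma bb2_ext (m j : ℕ) (h : m ≤ j) :
    bb2 m = ∑ i ∈ range (j+1), (-1 : K)^i * q^(i*(i+1)/2) * qbinom q (m - i) i := by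
  rw [bb2]
  apply Finset.sum_subset
  · intro x hx
    simp only [Finset.mem_range] at hx ⊢
    omega
  · intro x _ hx
    simp only [Finset.mem_range, not_lt] at hx
    rw [term_vanish (by omega)]
    ring

lemma R1 (m : ℕ) : bb (m+2) = bb2 (m+1) - bb2 m := by
  rw [bb, Finset.sum_range_succ', Finset.sum_range_succ]
  rw [show (m+2) - (m+2) = 0 by omega, qbinom_small (by omega : 0 < m+2)]
  simp only [mul_zero, add_zero]
  rw [show ((-1:K)^0 * q^(0*(0-1)/2) * qbinom q (m+2-0) 0) = 1 by rw [qbinom_zero]; norm_num]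
  have step : ∀ i' ∈ range (m+1),
      (-1:K)^(i'+1) * q^((i'+1)*(i'+1-1)/2) * qbinom q (m+2-(i'+1)) (i'+1)
      = -((-1:K)^i' * q^(i'*(i'+1)/2) * qbinom q (m - i') i')
        + -((-1:K)^i' * q^(i'*(i'+1)/2) * q^(i'+1) * qbinom q (m - i') (i'+1)) := by
    intro i' hi'
    simp only [Finset.mem_range] at hi'
    rw [show m+2-(i'+1) = (m - i') + 1 by omega, pascal1 (m - i') i']
    rw [show (i'+1)*(i'+1-1)/2 = i'*(i'+1)/2 by rw [Nat.add_sub_cancel, Nat.mul_comm]]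
    rw [pow_succ]
    ring
  rw [Finset.sum_congr rfl step, Finset.sum_add_distrib]
  have e0 : ((-1:K)^0 * q^(0*(0+1)/2) * qbinom q (m+1-0) 0) = 1 := by
    rw [qbinom_zero]; norm_num
  have ee : ∀ i ∈ range (m+1),
      (-1:K)^(i+1) * q^((i+1)*(i+1+1)/2) * qbinom q (m+1-(i+1)) (i+1)
      = -((-1:K)^i * q^(i*(i+1)/2) * q^(i+1) * qbinom q (m - i) (i+1)) := by
    intro i hi
    have hexp : (i+1)*(i+1+1)/2 = i*(i+1)/2 + (i+1) := by
      have t1 := tri1 (i+1)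
      have t2 := tri1 i
      have hr : (i+1)*(i+1+1) = i*(i+1) + 2*(i+1) := by ring
      omega
    rw [show m+1-(i+1) = m - i by omega, hexp, pow_add]
    ring
  have p2 : bb2 (m+1)
      = ∑ i ∈ range (m+1), -((-1:K)^i * q^(i*(i+1)/2) * q^(i+1) * qbinom q (m - i) (i+1)) + 1 := by
    rw [bb2, Finset.sum_range_succ', e0, Finset.sum_congr rfl ee]
  rw [p2, bb2, Finset.sum_neg_distrib]
  ring

lemma R2 (m : ℕ) : bb2 (m+2) = bb2 (m+1) - q^(m+1) * bb m := by
  rw [bb2, Finset.sum_range_succ', Finset.sum_range_succ]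
  rw [show (m+2) - (m+2) = 0 by omega, qbinom_small (by omega : 0 < m+2)]
  simp only [mul_zero, add_zero]
  rw [show ((-1:K)^0 * q^(0*(0+1)/2) * qbinom q (m+2-0) 0) = 1 by rw [qbinom_zero]; norm_num]
  have step : ∀ i' ∈ range (m+1),
      (-1:K)^(i'+1) * q^((i'+1)*(i'+1+1)/2) * qbinom q (m+2-(i'+1)) (i'+1)
      = -((-1:K)^i' * q^((i'+1)*(i'+1+1)/2) * qbinom q (m - i') (i'+1))
        + -(q^(m+1) * ((-1:K)^i' * q^(i'*(i'-1)/2) * qbinom q (m - i') i')) := by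
    intro i' hi'
    simp only [Finset.mem_range] at hi'
    rw [show m+2-(i'+1) = (m - i') + 1 by omega, pascal2 (m - i') i']
    rcases le_or_gt (2*i') m with hc | hc
    · have t1 := tri1 (i'+1)
      have t2 := tri2 i'
      have hr : (i'+1)*(i'+1+1) = i'*(i'-1) + 2*(2*i'+1) := by
        rcases i' with _ | w
        · rfl
        · rw [Nat.succ_sub_one]
          ring
      have hexp : (i'+1)*(i'+1+1)/2 + (m - i' - i') = i'*(i'-1)/2 + (m+1) := by omega
      have hq : q^((i'+1)*(i'+1+1)/2) * q^(m - i' - i') = q^(i'*(i'-1)/2) * q^(m+1) := by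
        rw [← pow_add, ← pow_add, hexp]
      rw [pow_succ]
      calc (-1:K)^i' * -1 * q^((i'+1)*(i'+1+1)/2) *
            (qbinom q (m-i') (i'+1) + q^(m-i'-i') * qbinom q (m-i') i')
          = -((-1:K)^i' * q^((i'+1)*(i'+1+1)/2) * qbinom q (m - i') (i'+1))
            + -((-1:K)^i' * (q^((i'+1)*(i'+1+1)/2) * q^(m-i'-i')) * qbinom q (m - i') i') := by
            ring
        _ = _ := by rw [hq]; ring
    · rw [term_vanish (by omega : m < 2*i'), pow_succ]
      ring
  rw [Finset.sum_congr rfl step, Finset.sum_add_distrib]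
  have e0 : ((-1:K)^0 * q^(0*(0+1)/2) * qbinom q (m+1-0) 0) = 1 := by
    rw [qbinom_zero]; norm_num
  have ee : ∀ i ∈ range (m+1),
      (-1:K)^(i+1) * q^((i+1)*(i+1+1)/2) * qbinom q (m+1-(i+1)) (i+1)
      = -((-1:K)^i * q^((i+1)*(i+1+1)/2) * qbinom q (m - i) (i+1)) := by
    intro i hi
    rw [show m+1-(i+1) = m - i by omega]
    ring
  have p1 : bb2 (m+1)
      = ∑ i ∈ range (m+1), -((-1:K)^i * q^((i+1)*(i+1+1)/2) * qbinom q (m - i) (i+1)) + 1 := by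
    rw [bb2, Finset.sum_range_succ', e0, Finset.sum_congr rfl ee]
  have p2 : ∑ i' ∈ range (m+1), -(q^(m+1) * ((-1:K)^i' * q^(i'*(i'-1)/2) * qbinom q (m - i') i'))
      = - (q^(m+1) * bb m) := by
    rw [bb, Finset.mul_sum, ← Finset.sum_neg_distrib]
  rw [p1, p2]
  ring

lemma R3 (m : ℕ) : bb (m+3) = - (q^(m+1) * bb m) := by
  have h1 : bb (m+3) = bb2 (m+2) - bb2 (m+1) := R1 (m+1)
  rw [h1, R2 m]
  ring

lemma bb_step6 (m : ℕ) : bb (m+6) = q^(2*m+5) * bb m := by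
  have h1 : bb (m+6) = -(q^(m+4) * bb (m+3)) := R3 (m+3)
  rw [h1, R3 m, show 2*m+5 = (m+4)+(m+1) by ring, pow_add]
  ring

lemma bb_zero : bb 0 = 1 := by
  rw [bb]
  simp [qbinom_zero]

lemma bb_one : bb 1 = 1 := by
  rw [bb, Finset.sum_range_succ, Finset.sum_range_succ, Finset.sum_range_zero]
  rw [show (1:ℕ) - 1 = 0 by rfl, qbinom_small (by omega : 0 < 1), qbinom_zero]
  norm_num

lemma bb_two : bb 2 = 0 := by
  rw [bb, Finset.sum_range_succ, Finset.sum_range_succ, Finset.sum_range_succ,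
    Finset.sum_range_zero]
  rw [show (2:ℕ) - 1 = 1 by rfl, show (2:ℕ) - 2 = 0 by rfl, qbinom_zero,
    qbinom_self, qbinom_small (by omega : 0 < 2)]
  norm_num

lemma bb_6a1 (a : ℕ) : bb (6*a+1) = q^(a*(6*a+1)) := by
  induction a with
  | zero => simpa using bb_one
  | succ b ih =>
    rw [show 6*(b+1)+1 = (6*b+1)+6 by ring, bb_step6, ih, ← pow_add]
    congr 1
    ring

lemma bb_6a3 (a : ℕ) : bb (6*a+3) = -q^((2*a+1)*(3*a+1)) := by
  induction a with
  | zero =>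
    have h := R3 0
    rw [bb_zero] at h
    simpa using h
  | succ b ih =>
    rw [show 6*(b+1)+3 = (6*b+3)+6 by ring, bb_step6, ih, mul_neg, ← pow_add]
    congr 2
    ring

lemma bb_6a5 (a : ℕ) : bb (6*a+5) = 0 := by
  induction a with
  | zero =>
    have h := R3 2
    rw [bb_two] at h
    simpa using h
  | succ b ih =>
    rw [show 6*(b+1)+5 = (6*b+5)+6 by ring, bb_step6, ih]
    ring

-- Part 4 : qLs at odd indices via bb
lemma bb_eq (m j : ℕ) (h : m ≤ 2*j+1) :
    bb m = ∑ i ∈ range (j+1), (-1 : K)^i * q^(i*(i-1)/2) * qbinom q (m - i) i := by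
  rcases le_total (j+1) (m+1) with hc | hc
  · rw [bb]
    symm
    apply Finset.sum_subset
    · intro x hx
      simp only [Finset.mem_range] at hx ⊢
      omega
    · intro x _ hx
      simp only [Finset.mem_range, not_lt] at hx
      rw [term_vanish (by omega)]
      ring
  · exact bb_ext m j (by omega)

lemma ratio (n i : ℕ) (h1 : 1 ≤ i) (h2 : 2*i ≤ n) :
    (qint q n / qint q (n-i)) * qbinom q (n-i) i
      = qbinom q (n-i) i + q^(n-i) * qbinom q (n-i-1) (i-1) := by
  have hi : i ≤ n - i := by omega
  have hi2 : i - 1 ≤ n - i - 1 := by omega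
  rw [qbinom_eq hi, qbinom_eq hi2]
  have e1 : n - i - i = n - 2*i := by omega
  have e2 : n - i - 1 - (i-1) = n - 2*i := by omega
  rw [e1, e2]
  have hq : qint q n = qint q (n-i) + q^(n-i) * qint q i := by
    have h := qint_add (n-i) i
    rw [show n - i + i = n by omega] at h
    exact h
  have f1 : qfact q (n-i) = qfact q (n-i-1) * qint q (n-i) := by
    have h := qfact_succ (n-i-1)
    rw [show n-i-1+1 = n-i by omega] at h
    exact h
  have f2 : qfact q i = qfact q (i-1) * qint q i := by
    have h := qfact_succ (i-1)
    rw [show i-1+1 = i by omega] at h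
    exact h
  rw [hq, f1, f2]
  have n1 := qfact_ne (n-i-1)
  have n2 := qfact_ne (i-1)
  have n3 := qfact_ne (n-2*i)
  have n4 := qint_ne (n-i) (by omega)
  have n5 := qint_ne i (by omega)
  field_simp

lemma qLs_odd (k : ℕ) :
    qLs q 1 (-1) (2*(k+1)+1) = bb (2*k+3) - q^(2*k+2) * bb (2*k+1) := by
  rw [show 2*(k+1)+1 = 2*k+3 by ring]
  rw [qLs, if_neg (by omega : ¬(2*k+3 = 0)), qL, if_neg (by omega : ¬(2*k+3 = 0))]
  rw [show (2*k+3)/2 + 1 = k+2 by omega]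
  simp only [one_pow, mul_one]
  rw [Finset.sum_range_succ']
  have h0 : q ^ (0*(0-1)/2) * (qint q (2*k+3) / qint q (2*k+3 - 0)) *
      qbinom q (2*k+3 - 0) 0 * (-1:K)^0 = 1 := by
    rw [Nat.sub_zero, qbinom_zero, div_self (qint_ne _ (by omega))]
    norm_num
  have hstep : ∀ i' ∈ range (k+1),
      q ^ ((i'+1)*((i'+1)-1)/2) * (qint q (2*k+3) / qint q (2*k+3 - (i'+1))) *
        qbinom q (2*k+3 - (i'+1)) (i'+1) * (-1:K)^(i'+1)
      = (-1:K)^(i'+1) * q^((i'+1)*((i'+1)-1)/2) * qbinom q (2*k+3 - (i'+1)) (i'+1)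
        + -((-1:K)^i' * q^(i'*(i'-1)/2) * (q^(2*k+2) * qbinom q (2*k+1 - i') i')) := by
    intro i' hi'
    simp only [Finset.mem_range] at hi'
    have hr := ratio (2*k+3) (i'+1) (by omega) (by omega)
    rw [show (2*k+3) - (i'+1) - 1 = (2*k+1) - i' by omega,
      show (i'+1) - 1 = i' by omega] at hr
    have lhs_eq : q ^ ((i'+1)*((i'+1)-1)/2) * (qint q (2*k+3) / qint q (2*k+3 - (i'+1))) *
        qbinom q (2*k+3 - (i'+1)) (i'+1) * (-1:K)^(i'+1)
        = ((qint q (2*k+3) / qint q (2*k+3 - (i'+1))) * qbinom q (2*k+3 - (i'+1)) (i'+1))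
          * (q ^ ((i'+1)*((i'+1)-1)/2) * (-1:K)^(i'+1)) := by
      ring
    rw [lhs_eq, hr]
    have hexp : (i'+1)*((i'+1)-1)/2 + (2*k+3 - (i'+1)) = i'*(i'-1)/2 + (2*k+2) := by
      have t1 := tri1 i'
      have t2 := tri2 i'
      have hr2 : (i'+1)*((i'+1)-1) = i'*(i'+1) := by
        rw [Nat.add_sub_cancel, Nat.mul_comm]
      have hr3 : i'*(i'+1) = i'*(i'-1) + 2*i' := by
        rcases i' with _ | w
        · rfl
        · rw [Nat.succ_sub_one]
          ring
      omega
    have hq2 : q^((i'+1)*((i'+1)-1)/2) * q^(2*k+3 - (i'+1))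
        = q^(i'*(i'-1)/2) * q^(2*k+2) := by
      rw [← pow_add, ← pow_add, hexp]
    rw [pow_succ]
    linear_combination (-((-1:K)^i' * qbinom q (2*k+1 - i') i')) * hq2
  rw [h0, Finset.sum_congr rfl hstep, Finset.sum_add_distrib]
  have hP : bb (2*k+3) = (∑ i' ∈ range (k+1),
      (-1:K)^(i'+1) * q^((i'+1)*((i'+1)-1)/2) * qbinom q (2*k+3 - (i'+1)) (i'+1)) + 1 := by
    rw [bb_eq (2*k+3) (k+1) (by omega), Finset.sum_range_succ']
    congr 1
    rw [Nat.sub_zero, qbinom_zero]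
    norm_num
  have hQ : ∑ i' ∈ range (k+1),
      -((-1:K)^i' * q^(i'*(i'-1)/2) * (q^(2*k+2) * qbinom q (2*k+1 - i') i'))
      = -(q^(2*k+2) * bb (2*k+1)) := by
    rw [bb_eq (2*k+1) k (by omega), Finset.mul_sum, ← Finset.sum_neg_distrib]
    refine Finset.sum_congr rfl fun i _ => ?_
    ring
  rw [hQ, hP]
  ring

-- Part 5 : closed forms
lemma qLs_one : qLs q 1 (-1) 1 = 1 := by
  rw [qLs, if_neg (by omega : ¬(1=0)), qL, if_neg (by omega : ¬(1=0))]
  norm_num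
  rw [qbinom_zero, div_self (qint_ne 1 (by omega))]
  norm_num

lemma cA (a : ℕ) : qLs q 1 (-1) (2*(3*a)+1) = q^(a*(6*a+1)) := by
  rcases a with _ | b
  · simpa using qLs_one
  · rw [show 2*(3*(b+1))+1 = 2*((3*b+2)+1)+1 by ring, qLs_odd (3*b+2)]
    rw [show 2*(3*b+2)+3 = 6*(b+1)+1 by ring, show 2*(3*b+2)+1 = 6*b+5 by ring,
      bb_6a1 (b+1), bb_6a5 b]
    ring

lemma cB (a : ℕ) : qLs q 1 (-1) (2*(3*a+1)+1)
    = -q^((2*a+1)*(3*a+1)) - q^((2*a+1)*(3*a+2)) := by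
  rw [show 2*(3*a+1)+1 = 2*((3*a)+1)+1 by ring, qLs_odd (3*a)]
  rw [show 2*(3*a)+3 = 6*a+3 by ring, show 2*(3*a)+1 = 6*a+1 by ring,
    bb_6a3 a, bb_6a1 a, ← pow_add]
  rw [show 2*(3*a)+2 + a*(6*a+1) = (2*a+1)*(3*a+2) by ring]

lemma cC (a : ℕ) : qLs q 1 (-1) (2*(3*a+2)+1) = q^((a+1)*(6*a+5)) := by
  rw [show 2*(3*a+2)+1 = 2*((3*a+1)+1)+1 by ring, qLs_odd (3*a+1)]
  rw [show 2*(3*a+1)+3 = 6*a+5 by ring, show 2*(3*a+1)+1 = 6*a+3 by ring,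
    bb_6a5 a, bb_6a3 a]
  rw [show (a+1)*(6*a+5) = (2*(3*a+1)+2) + (2*a+1)*(3*a+1) by ring, pow_add]
  ring

-- computing Tz at explicit arguments
lemma Tz_formula (N : ℕ) (j : ℤ) (e : ℕ) (m : ℤ) (sgn : K) (hsgn : (-1:K)^j = sgn)
    (he : j*(3*j+1) = 2*(e:ℤ)) (hm : ((N:ℤ) - 3*j)/2 = m) :
    Tz N j = sgn * q^e * QB N m := by
  rw [Tz, hsgn, hm, he, Int.mul_ediv_cancel_left _ (by norm_num : (2:ℤ) ≠ 0), zpow_natCast]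

lemma sgn_even (c : ℕ) : (-1:K)^((2*(c:ℤ))) = 1 := by
  rw [show (2*(c:ℤ)) = ((2*c : ℕ) : ℤ) by push_cast; ring, zpow_natCast]
  exact Even.neg_one_pow ⟨c, by ring⟩

lemma sgn_odd (c : ℕ) : (-1:K)^((2*(c:ℤ)+1)) = -1 := by
  rw [show (2*(c:ℤ)+1) = ((2*c+1 : ℕ) : ℤ) by push_cast; ring, zpow_natCast]
  exact Odd.neg_one_pow ⟨c, by ring⟩

lemma sgn_neg (j : ℤ) (s : K) (h : (-1:K)^j = s) (hs : s = 1 ∨ s = -1) :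
    (-1:K)^(-j) = s := by
  rw [zpow_neg, h]
  rcases hs with rfl | rfl
  · norm_num
  · norm_num

/-- the bridge : k-indexed sum equals 1. -/
lemma key (n : ℕ) :
    ∑ k ∈ range (n+1), qLs q 1 (-1) (2*k+1) * QB (2*n+1) ((n:ℤ) - k) = 1 := by
  have hext : ∑ k ∈ range (n+1), qLs q 1 (-1) (2*k+1) * QB (2*n+1) ((n:ℤ) - k)
      = ∑ k ∈ range (3*(n+1)), qLs q 1 (-1) (2*k+1) * QB (2*n+1) ((n:ℤ) - k) := by
    apply Finset.sum_subset
    · intro x hx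
      simp only [Finset.mem_range] at hx ⊢
      omega
    · intro x _ hx
      simp only [Finset.mem_range, not_lt] at hx
      rw [QB_neg (by omega : ((n:ℤ) - x) < 0)]
      ring
  rw [hext, sum_triples]
  -- now compute the RHS : SS (2n+1) (2n+1) = 1
  have hSS := SS_one (2*n+1)
  rw [SS, show 2*(2*n+1)+1 = (2*n+1) + (2*n+2) by ring, Finset.sum_range_add] at hSS
  -- top part : j = t ≥ 0
  have htop : ∑ t ∈ range (2*n+2), Tz (2*n+1) ((((2*n+1) + t : ℕ)) - ((2*n+1 : ℕ) : ℤ))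
      = ∑ s ∈ range (n+1), (Tz (2*n+1) (2*(s:ℤ)) + Tz (2*n+1) (2*(s:ℤ)+1)) := by
    rw [show 2*n+2 = 2*(n+1) by ring, sum_pairs]
    refine Finset.sum_congr rfl fun s _ => ?_
    congr 2 <;> push_cast <;> ring
  -- bottom part : j = -(i+1)
  have hbot : ∑ t ∈ range (2*n+1), Tz (2*n+1) ((t : ℤ) - ((2*n+1 : ℕ) : ℤ))
      = ∑ s ∈ range (n+1), (Tz (2*n+1) (-(2*(s:ℤ)+1)) + Tz (2*n+1) (-(2*(s:ℤ)+2))) := by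
    rw [← Finset.sum_range_reflect]
    have step1 : ∀ i ∈ range (2*n+1),
        Tz (2*n+1) ((((2*n+1) - 1 - i : ℕ) : ℤ) - ((2*n+1 : ℕ) : ℤ))
        = Tz (2*n+1) (-((i:ℤ)+1)) := by
      intro i hi
      simp only [Finset.mem_range] at hi
      congr 1
      have : ((2*n+1) - 1 - i : ℕ) = 2*n - i := by omega
      rw [this]
      push_cast [show i ≤ 2*n by omega]
      ring
    rw [Finset.sum_congr rfl step1]
    have hex2 : ∑ i ∈ range (2*n+2), Tz (2*n+1) (-((i:ℤ)+1))
        = ∑ i ∈ range (2*n+1), Tz (2*n+1) (-((i:ℤ)+1)) := by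
      rw [Finset.sum_range_succ, Tz_vanish (by right; push_cast; omega), add_zero]
    rw [← hex2, show 2*n+2 = 2*(n+1) by ring, sum_pairs]
    refine Finset.sum_congr rfl fun s _ => ?_
    congr 2 <;> push_cast <;> ring
  rw [htop, hbot, ← Finset.sum_add_distrib] at hSS
  refine Eq.trans ?_ hSS
  refine Finset.sum_congr rfl fun a ha => ?_
  -- compute each of the four Tz terms
  have T1 : Tz (2*n+1) (2*(a:ℤ)) = q^(a*(6*a+1)) * QB (2*n+1) ((n:ℤ) - ((3*a : ℕ) : ℤ)) := by
    rw [Tz_formula (2*n+1) (2*(a:ℤ)) (a*(6*a+1)) ((n:ℤ) - ((3*a : ℕ) : ℤ)) 1 (sgn_even a)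
      (by push_cast; ring) (by push_cast; omega)]
    ring
  have T2 : Tz (2*n+1) (2*(a:ℤ)+1)
      = -q^((2*a+1)*(3*a+2)) * QB (2*n+1) ((n:ℤ) - ((3*a+1 : ℕ) : ℤ)) := by
    rw [Tz_formula (2*n+1) (2*(a:ℤ)+1) ((2*a+1)*(3*a+2)) ((n:ℤ) - ((3*a+1 : ℕ) : ℤ)) (-1)
      (sgn_odd a) (by push_cast; ring) (by push_cast; omega)]
    ring
  have T3 : Tz (2*n+1) (-(2*(a:ℤ)+1))
      = -q^((2*a+1)*(3*a+1)) * QB (2*n+1) ((n:ℤ) - ((3*a+1 : ℕ) : ℤ)) := by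
    rw [Tz_formula (2*n+1) (-(2*(a:ℤ)+1)) ((2*a+1)*(3*a+1)) ((n:ℤ) + 3*a + 2) (-1)
      (sgn_neg _ _ (sgn_odd a) (Or.inr rfl)) (by push_cast; ring) (by push_cast; omega)]
    rw [QB_symm (2*n+1) ((n:ℤ) + 3*a + 2), show ((2*n+1 : ℕ) : ℤ) - ((n:ℤ) + 3*a + 2)
      = (n:ℤ) - ((3*a+1 : ℕ) : ℤ) by push_cast; ring]
    ring
  have T4 : Tz (2*n+1) (-(2*(a:ℤ)+2))
      = q^((a+1)*(6*a+5)) * QB (2*n+1) ((n:ℤ) - ((3*a+2 : ℕ) : ℤ)) := by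
    have hs : (-1:K)^(-(2*(a:ℤ)+2)) = 1 := by
      have h2 : (2*(a:ℤ)+2) = 2*((a+1 : ℕ) : ℤ) := by push_cast; ring
      rw [show (-(2*(a:ℤ)+2)) = -(2*((a+1 : ℕ) : ℤ)) by rw [h2],
        sgn_neg _ _ (sgn_even (a+1)) (Or.inl rfl)]
    rw [Tz_formula (2*n+1) (-(2*(a:ℤ)+2)) ((a+1)*(6*a+5)) ((n:ℤ) + 3*a + 3) 1
      hs (by push_cast; ring) (by push_cast; omega)]
    rw [QB_symm (2*n+1) ((n:ℤ) + 3*a + 3), show ((2*n+1 : ℕ) : ℤ) - ((n:ℤ) + 3*a + 3)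
      = (n:ℤ) - ((3*a+2 : ℕ) : ℤ) by push_cast; ring]
    ring
  rw [cA a, cB a, cC a, T1, T2, T3, T4]
  ring

theorem stmt18 (n : ℕ) :
    ∑ k ∈ range (n + 1), qLs q 1 (-1) (2 * k + 1) / (qpoch q (n - k) * qpoch q (n + k + 1))
      = 1 / qpoch q (2 * n + 1) := by
  have hP := qpoch_ne (2*n+1)
  have step : ∀ k ∈ range (n+1),
      qLs q 1 (-1) (2*k+1) / (qpoch q (n-k) * qpoch q (n+k+1))
      = qLs q 1 (-1) (2*k+1) * QB (2*n+1) ((n:ℤ) - k) / qpoch q (2*n+1) := by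
    intro k hk
    simp only [Finset.mem_range] at hk
    have hQB : QB (2*n+1) ((n:ℤ) - k) = qbinom q (2*n+1) (n-k) := by
      rw [show ((n:ℤ) - k) = ((n - k : ℕ) : ℤ) by omega, QB_nat]
    have h1 := qfact_ne (n-k)
    have h2 := qfact_ne (n+k+1)
    have h3 := qfact_ne (2*n+1)
    have hbin : qbinom q (2*n+1) (n-k) * (qpoch q (n-k) * qpoch q (n+k+1))
        = qpoch q (2*n+1) := by
      rw [qbinom_eq (show n-k ≤ 2*n+1 by omega), show 2*n+1 - (n-k) = n+k+1 by omega,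
        qpoch_eq, qpoch_eq, qpoch_eq]
      field_simp
      rw [show (2*n+1) = (n-k)+(n+k+1) by omega, pow_add]
      ring
    rw [hQB, div_eq_div_iff (mul_ne_zero (qpoch_ne _) (qpoch_ne _)) hP, ← hbin]
    ring
  rw [Finset.sum_congr rfl step, ← Finset.sum_div, key]

end
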